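/- For every positive integer n and every t with 1 ≤ t ≤ ⌊n/2⌋, the circulant graph C(n; {t, t+1, ..., ⌊n/2⌋}) is semi-transitive. Moreover, the orientation directing every edge {i, j} with i < j (as integers in {0, 1, ..., n-1}) from i to j is a semi-transitive orientation of this graph. -/

import Mathlib

/-- The circulant graph `C(n; S)`: vertex set `ZMod n`, with distinct `i`, `j` adjacent iff
`(i - j) mod n` or `(j - i) mod n` lies in `S`. -/
def circGraph (n : ℕ) (S : Set ℕ) : SimpleGraph (ZMod n) :=
  SimpleGraph.fromRel (fun i j => ∃ a ∈ S, i - j = (a : ZMod n))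

/-- An orientation of a simple graph `G`: every edge gets exactly one direction. -/
structure GraphOrientation {V : Type*} (G : SimpleGraph V) where
  dir : V → V → Prop
  adj_of_dir : ∀ {u v : V}, dir u v → G.Adj u v
  dir_total : ∀ {u v : V}, G.Adj u v → dir u v ∨ dir v u
  dir_asymm : ∀ {u v : V}, dir u v → ¬ dir v u

/-- An orientation is acyclic if it has no directed cycle. -/
def GraphOrientation.IsAcyclic {V : Type*} {G : SimpleGraph V} (o : GraphOrientation G) : Prop :=
  ∀ v : V, ¬ Relation.TransGen o.dir v v

/-- An orientation is semi-transitive if it is acyclic and, for every directed path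
`p 0 → p 1 → ⋯ → p m` with `m ≥ 2`, either `p 0` and `p m` are non-adjacent or there is
an arc `p i → p j` for all `i < j ≤ m`. -/
def GraphOrientation.IsSemiTransitive {V : Type*} {G : SimpleGraph V} (o : GraphOrientation G) : Prop :=
  o.IsAcyclic ∧
    ∀ (m : ℕ) (p : ℕ → V), 2 ≤ m → (∀ i, i < m → o.dir (p i) (p (i + 1))) →
      (¬ G.Adj (p 0) (p m) ∨ ∀ i j : ℕ, i < j → j ≤ m → o.dir (p i) (p j))

/-- A graph is semi-transitive if it admits a semi-transitive orientation. -/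
def SimpleGraph.SemiTransitive {V : Type*} (G : SimpleGraph V) : Prop :=
  ∃ o : GraphOrientation G, o.IsSemiTransitive

section aux
variable {n t : ℕ}

lemma circ_adj_iff [NeZero n] (ht1 : 1 ≤ t) (ht2 : t ≤ n / 2)
    {i j : ZMod n} (hv : i.val < j.val) :
    (circGraph n (Set.Icc t (n / 2))).Adj i j ↔
      t ≤ j.val - i.val ∧ j.val - i.val ≤ n - t := by
  have hn : 0 < n := Nat.pos_of_ne_zero (NeZero.ne n)
  have hd : (j - i).val = j.val - i.val := ZMod.val_sub hv.le
  have hdpos : 0 < j.val - i.val := Nat.sub_pos_of_lt hv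
  have hdlt : j.val - i.val < n := lt_of_le_of_lt (Nat.sub_le _ _) (ZMod.val_lt j)
  have hne : i ≠ j := fun h => lt_irrefl _ (h ▸ hv)
  have hji : (j - i) ≠ 0 := sub_ne_zero.mpr hne.symm
  haveI : NeZero (j - i) := ⟨hji⟩
  have hij : (i - j).val = n - (j.val - i.val) := by
    have h1 : i - j = -(j - i) := by ring
    rw [h1, ZMod.val_neg_of_ne_zero, hd]
  have hcast : ∀ a : ℕ, a < n → ∀ x : ZMod n, (x = (a : ZMod n) ↔ x.val = a) := by
    intro a ha x
    constructor
    · intro h; rw [h, ZMod.val_cast_of_lt ha]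
    · intro h; apply ZMod.val_injective n; rw [h, ZMod.val_cast_of_lt ha]
  constructor
  · rintro ⟨-, h | h⟩
    · obtain ⟨a, ⟨ha1, ha2⟩, ha⟩ := h
      have haln : a < n := lt_of_le_of_lt ha2 (Nat.div_lt_self hn one_lt_two)
      have := (hcast a haln _).mp ha
      rw [hij] at this
      omega
    · obtain ⟨a, ⟨ha1, ha2⟩, ha⟩ := h
      have haln : a < n := lt_of_le_of_lt ha2 (Nat.div_lt_self hn one_lt_two)
      have := (hcast a haln _).mp ha
      rw [hd] at this
      omega
  · rintro ⟨h1, h2⟩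
    refine ⟨hne, ?_⟩
    by_cases hc : j.val - i.val ≤ n / 2
    · right
      exact ⟨j.val - i.val, ⟨h1, hc⟩,
        (hcast _ hdlt _).mpr hd⟩
    · left
      refine ⟨n - (j.val - i.val), ⟨by omega, by omega⟩,
        (hcast _ (by omega) _).mpr hij⟩

end aux

/-- `C(n; {t, t+1, ..., ⌊n/2⌋})` is semi-transitive for every `1 ≤ t ≤ ⌊n/2⌋`; moreover the
orientation directing each edge `{i, j}` from the smaller to the larger representative in
`{0, ..., n-1}` is a semi-transitive orientation. -/
theorem circulant_up_to_half_semiTransitive (n t : ℕ) (hn : 0 < n)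
    (ht1 : 1 ≤ t) (ht2 : t ≤ n / 2) :
    (circGraph n (Set.Icc t (n / 2))).SemiTransitive ∧
    ∃ o : GraphOrientation (circGraph n (Set.Icc t (n / 2))),
      (∀ i j : ZMod n,
        o.dir i j ↔ ((circGraph n (Set.Icc t (n / 2))).Adj i j ∧ i.val < j.val)) ∧
      o.IsSemiTransitive := by
  haveI : NeZero n := ⟨hn.ne'⟩
  let G := circGraph n (Set.Icc t (n / 2))
  let o : GraphOrientation G :=
    { dir := fun i j => G.Adj i j ∧ i.val < j.val
      adj_of_dir := fun h => h.1
      dir_total := fun {u v} h => by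
        rcases Nat.lt_or_ge u.val v.val with h' | h'
        · exact Or.inl ⟨h, h'⟩
        · have hne : u.val ≠ v.val := fun he => h.ne (ZMod.val_injective n he)
          exact Or.inr ⟨h.symm, lt_of_le_of_ne h' (Ne.symm hne)⟩
      dir_asymm := fun h h' => absurd h'.2 (not_lt.mpr h.2.le) }
  have hac : o.IsAcyclic := by
    intro v hv
    have h2 : Relation.TransGen (fun a b : ZMod n => a.val < b.val) v v :=
      Relation.TransGen.mono (fun a b h => h.2) _ _ hv
    have htr : Transitive (fun a b : ZMod n => a.val < b.val) :=
      fun a b c hab hbc => lt_trans hab hbc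
    rw [@Relation.transGen_eq_self _ (fun a b : ZMod n => a.val < b.val) ⟨fun _ _ _ hab hbc => htr hab hbc⟩] at h2
    exact lt_irrefl _ h2
  have hsemi : o.IsSemiTransitive := by
    refine ⟨hac, ?_⟩
    intro m p hm hp
    by_cases hadj : G.Adj (p 0) (p m)
    · right
      have key : ∀ j, j ≤ m → ∀ i, i < j → (p i).val + t ≤ (p j).val := by
        intro j
        induction j with
        | zero => omega
        | succ j ih =>
          intro hj i hi
          have hstep := hp j (by omega)
          have hst : (p j).val + t ≤ (p (j + 1)).val := by
            have := (circ_adj_iff ht1 ht2 hstep.2).mp hstep.1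
            omega
          rcases Nat.lt_succ_iff_lt_or_eq.mp hi with hi | hi
          · have := ih (by omega) i hi
            omega
          · subst hi; exact hst
      have mono : ∀ i j, i ≤ j → j ≤ m → (p i).val ≤ (p j).val := by
        intro i j hij hj
        rcases eq_or_lt_of_le hij with rfl | h
        · exact le_rfl
        · have := key j hj i h; omega
      have h0m : (p 0).val + t ≤ (p m).val := key m le_rfl 0 (by omega)
      have hub : (p m).val - (p 0).val ≤ n - t :=
        ((circ_adj_iff ht1 ht2 (by omega)).mp hadj).2
      intro i j hij hj
      have h1 := key j hj i hij
      have h2 : (p 0).val ≤ (p i).val := mono 0 i (Nat.zero_le _) (by omega)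
      have h3 : (p j).val ≤ (p m).val := mono j m hj le_rfl
      have hvlt : (p i).val < (p j).val := by omega
      exact ⟨(circ_adj_iff ht1 ht2 hvlt).mpr (by omega), hvlt⟩
    · exact Or.inl hadj
  exact ⟨⟨o, hsemi⟩, o, fun i j => Iff.rfl, hsemi⟩
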